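/- arXiv:1805.07028 — 6 statements merged into one kernel-verified Lean document; each statement's English description precedes it below -/
import Mathlib

section
/- Let G be a Hausdorff abelian topological group which is an Ascoli space. Then every compact subset K of the Pontryagin dual group G^∧ (the group of continuous characters of G into the circle group, endowed with the compact-open topology) is equicontinuous as a family of maps from G to the circle. (Equivalently, the canonical evaluation homomorphism from G into its bidual is continuous.) -/
open scoped UniformConvergence

/-- A topological space `X` is *Ascoli* if every compact subset of `C(X, ℝ)`
(the space of continuous real-valued functions with the compact-open topology)
is equicontinuous. -/
def IsAscoli (X : Type*) [TopologicalSpace X] : Prop :=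
  ∀ K : Set C(X, ℝ), IsCompact K → Equicontinuous (fun f : K => ((f : C(X, ℝ)) : X → ℝ))

lemma equicontinuous_prod_mk' {ι X α β : Type*} [TopologicalSpace X] [UniformSpace α]
    [UniformSpace β] {F : ι → X → α} {G : ι → X → β} (hF : Equicontinuous F)
    (hG : Equicontinuous G) : Equicontinuous (fun i x => (F i x, G i x)) := by
  rw [equicontinuous_iff_continuous] at hF hG ⊢
  have key : (UniformFun.ofFun ∘ Function.swap (fun i x => (F i x, G i x)) : X → (ι →ᵤ (α × β))) =
      (UniformFun.uniformEquivProdArrow (α := ι) (β := α) (γ := β)).symm ∘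
        fun x => (UniformFun.ofFun (Function.swap F) x, UniformFun.ofFun (Function.swap G) x) :=
    rfl
  rw [key]
  exact (UniformFun.uniformEquivProdArrow.symm.continuous).comp (hF.prodMk hG)

/-- If a Hausdorff abelian topological group `G` is an Ascoli space, then every compact
subset of the Pontryagin dual `G^∧` is equicontinuous (as a family of maps `G → Circle`). -/
theorem ascoli_group_compact_dual_equicontinuous
    {G : Type*} [TopologicalSpace G] [CommGroup G] [IsTopologicalGroup G] [T2Space G]
    (hG : IsAscoli G) (K : Set (PontryaginDual G)) (hK : IsCompact K) :
    Equicontinuous (fun χ : K => ((χ : PontryaginDual G) : G → Circle)) := by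
  -- coercion `Circle → ℂ` is uniform inducing
  have hcirc : @IsUniformInducing Circle ℂ Circle.instUniformSpace _ ((↑) : Circle → ℂ) := isometry_subtype_coe.isUniformInducing
  have hcplx : IsUniformInducing (Complex.equivRealProd : ℂ → ℝ × ℝ) :=
    Complex.isUniformEmbedding_equivRealProd.isUniformInducing
  rw [hcirc.equicontinuous_iff, hcplx.equicontinuous_iff]
  -- real and imaginary part maps as continuous maps on the circle
  let re : C(Circle, ℝ) := ⟨fun z => (z : ℂ).re, Complex.continuous_re.comp continuous_subtype_val⟩
  let im : C(Circle, ℝ) := ⟨fun z => (z : ℂ).im, Complex.continuous_im.comp continuous_subtype_val⟩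
  have component : ∀ φ : C(Circle, ℝ),
      Equicontinuous (fun χ : K => fun g =>
        φ (((χ : PontryaginDual G) : G → Circle) g)) := by
    intro φ
    have hcont : Continuous (fun χ : PontryaginDual G => φ.comp χ.toContinuousMap) :=
      (ContinuousMap.continuous_postcomp φ).comp
        (ContinuousMonoidHom.isInducing_toContinuousMap G Circle).continuous
    have h1 := hG ((fun χ : PontryaginDual G => φ.comp χ.toContinuousMap) '' K)
      (hK.image hcont)
    have h2 := h1.comp (fun χ : K =>
      (⟨φ.comp (χ : PontryaginDual G).toContinuousMap, Set.mem_image_of_mem _ χ.2⟩ :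
        ((fun χ : PontryaginDual G => φ.comp χ.toContinuousMap) '' K)))
    exact h2
  have := equicontinuous_prod_mk' (component re) (component im)
  exact this
end

section
/- Assume a Tychonoff space X admits a family 𝒰 = {U_i : i ∈ I} of open subsets of X, a subset A = {a_i : i ∈ I} of X, and a point z ∈ X such that: (i) a_i ∈ U_i for every i ∈ I; (ii) for each compact subset C of X the set {i ∈ I : C ∩ U_i ≠ ∅} is finite; (iii) z is a cluster point of A, i.e., z belongs to the closure of A \ {z}. Then X is not an Ascoli space; that is, there exists a compact subset of C(X, ℝ) with the compact-open topology which is not equicontinuous. -/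
open Filter Topology

/-- Sufficient condition for a Tychonoff space not to be Ascoli: if `X` admits a family of
open sets `U i`, points `a i ∈ U i`, and a point `z` such that every compact set meets only
finitely many `U i` and `z` is a cluster point of `{a i}`, then there is a compact subset of
`C(X, ℝ)` (with the compact-open topology) which is not equicontinuous. -/
theorem not_ascoli_of_family
    {X : Type*} [TopologicalSpace X] [T35Space X]
    {I : Type*} (U : I → Set X) (a : I → X) (z : X)
    (hUopen : ∀ i, IsOpen (U i))
    (haU : ∀ i, a i ∈ U i)
    (hfin : ∀ C : Set X, IsCompact C → {i : I | (C ∩ U i).Nonempty}.Finite)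
    (hz : z ∈ closure (Set.range a \ {z})) :
    ∃ K : Set C(X, ℝ), IsCompact K ∧
      ¬ Equicontinuous (fun f : K => ((f : C(X, ℝ)) : X → ℝ)) := by
  -- construct bump functions
  have hbump : ∀ i : I, ∃ g : C(X, ℝ), g (a i) = 1 ∧ ∀ x ∉ U i, g x = 0 := by
    intro i
    obtain ⟨f, hfc, hf0, hf1⟩ := CompletelyRegularSpace.completely_regular (a i) (U i)ᶜ
      (hUopen i).isClosed_compl (by simp [haU i])
    refine ⟨⟨fun x => 1 - (f x : ℝ), by continuity⟩, by simp [hf0], fun x hx => ?_⟩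
    have : f x = 1 := hf1 hx
    simp [this]
  choose g hg1 hg0 using hbump
  letI : TopologicalSpace I := ⊥
  haveI : DiscreteTopology I := ⟨rfl⟩
  -- the map from the one-point compactification
  have htend : Tendsto g cofinite (𝓝 (0 : C(X, ℝ))) := by
    rw [ContinuousMap.tendsto_iff_forall_isCompact_tendstoUniformlyOn]
    intro C hC
    rw [Metric.tendstoUniformlyOn_iff]
    intro ε hε
    filter_upwards [(hfin C hC).eventually_cofinite_notMem] with i hi x hx
    have hxU : x ∉ U i := fun h => hi ⟨x, hx, h⟩
    simp [hg0 i x hxU, hε]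
  set Φ : OnePoint I → C(X, ℝ) := fun o => o.elim 0 g with hΦ
  have hΦc : Continuous Φ := by
    rw [OnePoint.continuous_iff_from_discrete]
    exact htend
  refine ⟨Set.range Φ, isCompact_range hΦc, ?_⟩
  intro heq
  have h2 := heq z {p : ℝ × ℝ | dist p.1 p.2 < 1/2} (Metric.dist_mem_uniformity (by norm_num))
  -- finitely many i with z ∈ U i
  have hF : {i : I | z ∈ U i}.Finite := by
    have := hfin {z} isCompact_singleton
    refine this.subset fun i hi => ⟨z, rfl, hi⟩
  have hS : (a '' {i : I | z ∈ U i} \ {z}).Finite := (hF.image a).diff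
  -- a neighborhood where all functions vary little, minus the bad finite set
  obtain ⟨V, hV, hVsub⟩ := h2.exists_mem
  have hV' : V \ (a '' {i : I | z ∈ U i} \ {z}) ∈ 𝓝 z := by
    refine Filter.inter_mem hV ?_
    apply mem_nhds_iff.mpr
    exact ⟨(a '' {i : I | z ∈ U i} \ {z})ᶜ, le_refl _, hS.isClosed.isOpen_compl,
      by simp⟩
  obtain ⟨p, hpV, hpa⟩ := mem_closure_iff_nhds.mp hz _ hV'
  obtain ⟨⟨j, rfl⟩, hpz⟩ := hpa
  have hjF : z ∉ U j := by
    intro h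
    exact hpV.2 ⟨⟨j, h, rfl⟩, hpz⟩
  have hk : (g j) ∈ Set.range Φ := ⟨(j : OnePoint I), rfl⟩
  have := hVsub (a j) hpV.1 ⟨g j, hk⟩
  simp only [Set.mem_setOf_eq] at this
  rw [hg0 j z hjF, hg1 j] at this
  norm_num at this
end

section
/- Let X be a Tychonoff space, z ∈ X, and let {g_i}_{i∈I} be continuous functions from X to [0, 2] and {U_i}_{i∈I} open subsets of X such that supp(g_i) ⊆ U_i for every i, the sets U_i are pairwise disjoint, z ∉ U_i for every i, and z belongs to the closure of ⋃_{i∈I} {x : g_i(x) ≥ 1}. Then for every equicontinuous subset 𝒦 of C(X, ℝ) and every ε > 0 there exist i ∈ I and a point x ∈ U_i such that |f(x) − f(z)| < ε for all f ∈ 𝒦, while g_i(x) − g_i(z) = g_i(x) ≥ 1 (note g_i(z) = 0 since z ∉ U_i ⊇ supp(g_i)). -/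
/-- Given a point `z`, continuous functions `g i : X → [0, 2]` with supports in pairwise disjoint
open sets `U i` avoiding `z`, and `z` in the closure of `⋃ i {x | g i x ≥ 1}`: for every
equicontinuous `𝒦 ⊆ C(X, ℝ)` and every `ε > 0` there are `i ∈ I` and `x ∈ U i` such that
`|f x - f z| < ε` for all `f ∈ 𝒦`, while `g i z = 0` and `g i x ≥ 1`. -/
theorem exists_point_close_but_g_large
    {X : Type*} [TopologicalSpace X] [T35Space X]
    {I : Type*} (z : X) (g : I → C(X, ℝ)) (U : I → Set X)
    (hrange : ∀ i x, g i x ∈ Set.Icc (0 : ℝ) 2)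
    (hUopen : ∀ i, IsOpen (U i))
    (hsupp : ∀ i, tsupport (g i) ⊆ U i)
    (hdisj : Pairwise (fun i j => Disjoint (U i) (U j)))
    (hzU : ∀ i, z ∉ U i)
    (hz : z ∈ closure (⋃ i, {x : X | 1 ≤ g i x}))
    (𝒦 : Set C(X, ℝ))
    (heq : Equicontinuous (fun f : 𝒦 => ((f : C(X, ℝ)) : X → ℝ)))
    (ε : ℝ) (hε : 0 < ε) :
    ∃ i : I, ∃ x ∈ U i, (∀ f ∈ 𝒦, |f x - f z| < ε) ∧ g i z = 0 ∧ 1 ≤ g i x := by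
  have hV : ∀ᶠ x in nhds z, ∀ f ∈ 𝒦, |f x - f z| < ε := by
    have h := Metric.equicontinuousAt_iff_right.mp (heq z) ε hε
    filter_upwards [h] with x hx f hf
    simpa [Real.dist_eq, abs_sub_comm] using hx ⟨f, hf⟩
  rcases mem_closure_iff_nhds.mp hz _ hV with ⟨x, hxV, hxU⟩
  rcases Set.mem_iUnion.mp hxU with ⟨i, hxi⟩
  have hxUi : x ∈ U i := hsupp i (subset_closure (by
    simp only [Function.mem_support]
    intro h0
    simp [h0] at hxi
    linarith))
  refine ⟨i, x, hxUi, hxV, ?_, hxi⟩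
  by_contra h0
  exact hzU i (hsupp i (subset_closure h0))
end

section
/- Let G be a topological group and let H be a dense subgroup of G, endowed with the subspace topology. If H is an Ascoli space, then G is an Ascoli space. -/
open Topology Filter


/-- If a set `s` is dense and Ascoli, then every compact set of `C(G, ℝ)` is
equicontinuous at every point of `s`. -/
lemma equicontinuousAt_of_mem_dense {G : Type*} [TopologicalSpace G] (s : Set G)
    (hd : Dense s) (hs : IsAscoli s) (K : Set C(G, ℝ)) (hK : IsCompact K)
    {h : G} (hh : h ∈ s) :
    EquicontinuousAt (fun f : K => ((f : C(G, ℝ)) : G → ℝ)) h := by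
  rw [Metric.equicontinuousAt_iff_right]
  intro ε hε
  set ρ : C(G, ℝ) → C(s, ℝ) := fun f => f.comp ⟨Subtype.val, continuous_subtype_val⟩ with hρ
  have hρc : Continuous ρ := ContinuousMap.continuous_precomp _
  have hK' : IsCompact (ρ '' K) := hK.image hρc
  have h1 := (hs (ρ '' K) hK') ⟨h, hh⟩
  rw [Metric.equicontinuousAt_iff_right] at h1
  have h2 := h1 (ε / 2) (by positivity)
  rw [nhds_subtype_eq_comap, Filter.eventually_comap] at h2
  rw [eventually_nhds_iff] at h2
  obtain ⟨U, hQ, hUo, hhU⟩ := h2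
  have key : ∀ x ∈ U, ∀ f ∈ K, dist ((f : C(G, ℝ)) h) (f x) ≤ ε / 2 := by
    intro x hx f hf
    have hxcl : x ∈ closure (U ∩ s) := hd.open_subset_closure_inter hUo hx
    have hclosed : IsClosed {y : G | dist (f h) (f y) ≤ ε / 2} :=
      isClosed_le (continuous_const.dist f.continuous) continuous_const
    refine closure_minimal ?_ hclosed hxcl
    rintro y ⟨hyU, hys⟩
    have := hQ y hyU ⟨y, hys⟩ rfl ⟨ρ f, Set.mem_image_of_mem ρ hf⟩
    exact le_of_lt this
  filter_upwards [hUo.mem_nhds hhU] with x hx f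
  exact lt_of_le_of_lt (key x hx f f.2) (by linarith)

/-- If a dense subgroup `H` of a topological group `G` is an Ascoli space, then so is `G`. -/
theorem isAscoli_of_denseSubgroup
    {G : Type*} [Group G] [TopologicalSpace G] [IsTopologicalGroup G]
    (H : Subgroup G) (hdense : Dense (H : Set G))
    (hH : IsAscoli H) : IsAscoli G := by
  intro K hK g
  set τc : C(G, G) := ⟨fun x => x * g, continuous_mul_right g⟩ with hτc
  set Φ : C(G, ℝ) → C(G, ℝ) := fun f => f.comp τc with hΦ
  have hΦc : Continuous Φ := ContinuousMap.continuous_precomp τc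
  have hK' : IsCompact (Φ '' K) := hK.image hΦc
  have haux : EquicontinuousAt (fun f : (Φ '' K) => ((f : C(G, ℝ)) : G → ℝ)) 1 :=
    equicontinuousAt_of_mem_dense (H : Set G) hdense hH (Φ '' K) hK' H.one_mem
  intro U hU
  have h1 := haux U hU
  have hmap : Filter.map (fun x => x * g) (𝓝 (1 : G)) = 𝓝 g := by
    simpa using (Homeomorph.mulRight g).map_nhds_eq 1
  rw [← hmap, Filter.eventually_map]
  filter_upwards [h1] with y hy f
  have := hy ⟨Φ f, Set.mem_image_of_mem Φ f.2⟩
  simpa [hΦ, hτc, one_mul] using this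
end

section
/- Let G be a Hausdorff abelian topological group which is a k-space (i.e., whose topology is compactly generated: a set is closed if and only if its intersection with every compact subset is closed in that subset). Then every compact subset K of the Pontryagin dual group G^∧ (the group of continuous characters of G into the circle group, endowed with the compact-open topology) is equicontinuous; equivalently, the canonical evaluation homomorphism α_G from G into its bidual G^∧∧ is continuous. -/
open Function Set Filter UniformConvergence

/-- A family of continuous functions whose range is totally bounded for the uniformity of
uniform convergence is equicontinuous. -/
theorem equicontinuous_of_range_totallyBounded {ι X α : Type*} [TopologicalSpace X]
    [UniformSpace α] (F : ι → X → α) (hc : ∀ i, Continuous (F i))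
    (hb : TotallyBounded (Set.range (UniformFun.ofFun ∘ F))) :
    Equicontinuous F := by
  intro x V hV
  rcases comp_comp_symm_mem_uniformity_sets hV with ⟨W, hW, hWs, hWV⟩
  obtain ⟨t, hts, htf, hcover⟩ := totallyBounded_iff_subset.mp hb (UniformFun.gen X α W)
    ((UniformFun.hasBasis_uniformity X α).mem_of_mem hW)
  have key : ∀ᶠ y in nhds x, ∀ g ∈ t, ((UniformFun.toFun g) x, (UniformFun.toFun g) y) ∈ W := by
    rw [Filter.eventually_all_finite htf]
    intro g hg
    obtain ⟨i, rfl⟩ := hts hg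
    exact (hc i).continuousAt.preimage_mem_nhds (mem_nhds_left _ hW)
  filter_upwards [key] with y hy i
  obtain ⟨g, hg, hig⟩ := Set.mem_iUnion₂.mp
    (hcover (Set.mem_range_self (f := UniformFun.ofFun ∘ F) i))
  have hig' : ∀ z, (F i z, (UniformFun.toFun g) z) ∈ W := fun z => hig z
  exact hWV ⟨UniformFun.toFun g y, ⟨UniformFun.toFun g x, hig' x, hy g hg⟩,
    hWs.symm _ _ (hig' y)⟩

/-- If a Hausdorff abelian topological group `G` is a k-space (a set is closed as soon as its
intersection with every compact subset is closed in that subset), then every compact subset of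
the Pontryagin dual `G^∧` is equicontinuous (equivalently, the canonical evaluation homomorphism
`α_G : G → G^∧∧` is continuous). -/
theorem kspace_group_compact_dual_equicontinuous
    {G : Type*} [TopologicalSpace G] [CommGroup G] [IsTopologicalGroup G] [T2Space G]
    (hk : ∀ s : Set G,
      (∀ C : Set G, IsCompact C → IsClosed ((fun x : C => (x : G)) ⁻¹' s)) → IsClosed s)
    (K : Set (PontryaginDual G)) (hK : IsCompact K) :
    Equicontinuous (fun χ : K => ((χ : PontryaginDual G) : G → Circle)) := by
  rw [equicontinuous_iff_continuous]
  rw [continuous_iff_isClosed]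
  intro T hT
  apply hk
  intro C hC
  have hrest : ∀ C : Set G, IsCompact C →
      Equicontinuous (fun χ : K => fun c : C => (χ : PontryaginDual G) (c : G)) := by
    intro C hC
    apply equicontinuous_of_range_totallyBounded
    · exact fun χ => (map_continuous (χ : PontryaginDual G)).comp continuous_subtype_val
    · -- the restriction map from the dual to `C →ᵤ Circle`
      set Θ : PontryaginDual G → (C →ᵤ Circle) := fun χ =>
        (UniformFun.ofFun ∘ (C.restrict : (G → Circle) → C → Circle) ∘
          UniformOnFun.toFun {K : Set G | IsCompact K})
          ((χ.toContinuousMap).toUniformOnFunIsCompact) with hΘ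
      have hΘc : Continuous Θ := by
        refine ((UniformOnFun.uniformContinuous_restrict G Circle {K : Set G | IsCompact K}
          hC).continuous).comp ?_
        exact (ContinuousMap.isUniformEmbedding_toUniformOnFunIsCompact.uniformContinuous
          |>.continuous).comp (ContinuousMonoidHom.isInducing_toContinuousMap G Circle).continuous
      have himg : Set.range (UniformFun.ofFun ∘
          fun χ : K => fun c : C => (χ : PontryaginDual G) (c : G)) ⊆ Θ '' K := by
        rintro _ ⟨χ, rfl⟩
        exact ⟨χ, χ.2, rfl⟩
      exact TotallyBounded.subset himg (hK.image hΘc).totallyBounded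
  have := equicontinuous_iff_continuous.mp (hrest C hC)
  exact hT.preimage this
end

section
/- Let X be a Tychonoff space, K an infinite compact subset of X, (η_n)_{n≥1} an injective sequence in K, and η_0 a cluster point of {η_n : n ≥ 1} with η_0 ∉ {η_n : n ≥ 1}. Let (λ_k)_{k≥1} be positive real numbers with Σ_{k=1}^∞ λ_k = 1. Then for every pointwise bounded equicontinuous subset Q of C(X, ℝ) and every ε > 0 there exist n, m ∈ ℕ (n, m ≥ 1) such that for every f ∈ Q, | (1/(m+1)) · Σ_{k=1}^n λ_k f(η_k) + m · (f(η_n) − f(η_0)) | < ε. -/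
/-- With `K`, `(η n)` and `(λ k)` as in Lemma `l:sequence-L(X)`: for every pointwise bounded
equicontinuous `Q ⊆ C(X, ℝ)` and every `ε > 0` there are `n, m ≥ 1` such that for every `f ∈ Q`,
`|(1/(m+1)) Σ_{k=1}^n λ_k f(η_k) + m (f(η_n) - f(η_0))| < ε`. -/
theorem zero_in_closure_of_a_nm
    {X : Type*} [TopologicalSpace X] [T35Space X]
    (K : Set X) (hKcomp : IsCompact K) (hKinf : K.Infinite)
    (η : ℕ → X) (hηK : ∀ n, 1 ≤ n → η n ∈ K)
    (hinj : ∀ n m, 1 ≤ n → 1 ≤ m → η n = η m → n = m)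
    (hcluster : η 0 ∈ closure {x | ∃ n, 1 ≤ n ∧ x = η n})
    (h0 : η 0 ∉ {x | ∃ n, 1 ≤ n ∧ x = η n})
    (lam : ℕ → ℝ) (hpos : ∀ k, 1 ≤ k → 0 < lam k)
    (hsum : HasSum (fun k : ℕ => lam (k + 1)) 1)
    (Q : Set C(X, ℝ))
    (hpb : ∀ x : X, Bornology.IsBounded ((fun f : C(X, ℝ) => f x) '' Q))
    (heq : Equicontinuous (fun f : Q => ((f : C(X, ℝ)) : X → ℝ)))
    (ε : ℝ) (hε : 0 < ε) :
    ∃ n m : ℕ, 1 ≤ n ∧ 1 ≤ m ∧ ∀ f ∈ Q,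
      |(1 / ((m : ℝ) + 1)) * ∑ k ∈ Finset.Icc 1 n, lam k * f (η k)
        + (m : ℝ) * (f (η n) - f (η 0))| < ε := by
  classical
  -- pointwise bounds
  have hC : ∀ x : X, ∃ C : ℝ, ∀ f ∈ Q, |f x| ≤ C := by
    intro x
    obtain ⟨C, hC⟩ := isBounded_iff_forall_norm_le.mp (hpb x)
    exact ⟨C, fun f hf => hC (f x) ⟨f, hf, rfl⟩⟩
  choose C hCspec using hC
  -- equicontinuity gives neighborhoods on which functions of Q vary by ≤ 1
  have hU : ∀ x : X, ∃ U ∈ nhds x, ∀ y ∈ U, ∀ f ∈ Q, |f y - f x| ≤ 1 := by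
    intro x
    have h1 := (Metric.equicontinuousAt_iff_right.mp (heq x)) 1 one_pos
    obtain ⟨U, hUmem, hUspec⟩ := h1.exists_mem
    refine ⟨U, hUmem, fun y hy f hf => ?_⟩
    have h2 := hUspec y hy ⟨f, hf⟩
    rw [Real.dist_eq] at h2
    rw [abs_sub_comm]
    exact h2.le
  choose U hUmem hUspec using hU
  -- finite subcover of K
  obtain ⟨t, htK, htcov⟩ := hKcomp.elim_nhds_subcover U (fun x _ => hUmem x)
  obtain ⟨x₀, hx₀⟩ := hKinf.nonempty
  have htne : t.Nonempty := by
    rcases Set.mem_iUnion₂.mp (htcov hx₀) with ⟨x, hx, _⟩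
    exact ⟨x, hx⟩
  -- uniform bound on K
  set M : ℝ := max 0 (1 + t.sup' htne C) with hM
  have hM0 : 0 ≤ M := le_max_left _ _
  have hMbound : ∀ f ∈ Q, ∀ y ∈ K, |f y| ≤ M := by
    intro f hf y hy
    rcases Set.mem_iUnion₂.mp (htcov hy) with ⟨x, hx, hyx⟩
    calc |f y| ≤ |f y - f x| + |f x| := by
          simpa using abs_add_le (f y - f x) (f x)
      _ ≤ 1 + C x := add_le_add (hUspec x y hyx f hf) (hCspec x f hf)
      _ ≤ 1 + t.sup' htne C := (add_le_add_iff_left 1).mpr (Finset.le_sup' C hx)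
      _ ≤ M := le_max_right _ _
  -- η 0 ∈ K
  have hη0K : η 0 ∈ K := by
    have hsub : {x | ∃ n, 1 ≤ n ∧ x = η n} ⊆ K := by
      rintro x ⟨n, hn, rfl⟩; exact hηK n hn
    exact hKcomp.isClosed.closure_subset_iff.mpr hsub hcluster
  -- choose m large
  obtain ⟨m, hm⟩ := exists_nat_gt (max 1 (2 * (M + 1) / ε))
  have hm1 : 1 ≤ m := by
    by_contra h
    push_neg at h
    interval_cases m
    · simp at hm
      linarith [le_max_left (1:ℝ) (2 * (M + 1) / ε), hm.1]
  have hmpos : (0:ℝ) < (m : ℝ) := by exact_mod_cast hm1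
  have hm' : 2 * (M + 1) / ε < m := lt_of_le_of_lt (le_max_right _ _) hm
  have hMm : M / ((m : ℝ) + 1) < ε / 2 := by
    rw [div_lt_div_iff₀ (by positivity) two_pos]
    rw [div_lt_iff₀ hε] at hm'
    nlinarith
  -- equicontinuity at η 0 with margin ε/(2m)
  have hδ : (0:ℝ) < ε / (2 * m) := by positivity
  have h3 := (Metric.equicontinuousAt_iff_right.mp (heq (η 0))) (ε / (2 * m)) hδ
  obtain ⟨V, hVmem, hVspec⟩ := h3.exists_mem
  -- cluster point: find n ≥ 1 with η n ∈ V
  obtain ⟨x, hxV, n, hn1, rfl⟩ := mem_closure_iff_nhds.mp hcluster V hVmem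
  refine ⟨n, m, hn1, hm1, fun f hf => ?_⟩
  have hfar : |f (η n) - f (η 0)| < ε / (2 * m) := by
    have h4 := hVspec (η n) hxV ⟨f, hf⟩
    rw [Real.dist_eq] at h4
    rwa [abs_sub_comm]
  -- bound the partial sum of lam
  have hpartial : ∑ k ∈ Finset.Icc 1 n, lam k ≤ 1 := by
    have hrange : ∑ k ∈ Finset.Icc 1 n, lam k = ∑ k ∈ Finset.range n, lam (k + 1) := by
      rw [show Finset.Icc 1 n = Finset.Ico 1 (n + 1) by rw [Finset.Ico_add_one_right_eq_Icc],
        Finset.sum_Ico_eq_sum_range]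
      simp [add_comm]
    rw [hrange]
    exact sum_le_hasSum (Finset.range n) (fun k _ => (hpos (k + 1) (Nat.le_add_left 1 k)).le) hsum
  -- bound |S|
  have hS : |∑ k ∈ Finset.Icc 1 n, lam k * f (η k)| ≤ M := by
    calc |∑ k ∈ Finset.Icc 1 n, lam k * f (η k)|
        ≤ ∑ k ∈ Finset.Icc 1 n, |lam k * f (η k)| := Finset.abs_sum_le_sum_abs _ _
      _ ≤ ∑ k ∈ Finset.Icc 1 n, lam k * M := by
          apply Finset.sum_le_sum
          intro k hk
          have hk1 : 1 ≤ k := (Finset.mem_Icc.mp hk).1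
          rw [abs_mul, abs_of_pos (hpos k hk1)]
          exact mul_le_mul_of_nonneg_left
            (hMbound f hf (η k) (hηK k hk1)) (hpos k hk1).le
      _ = (∑ k ∈ Finset.Icc 1 n, lam k) * M := by rw [Finset.sum_mul]
      _ ≤ 1 * M := mul_le_mul_of_nonneg_right hpartial hM0
      _ = M := one_mul M
  -- final estimate
  have hA : |(1 / ((m : ℝ) + 1)) * ∑ k ∈ Finset.Icc 1 n, lam k * f (η k)| < ε / 2 := by
    rw [abs_mul, abs_of_pos (by positivity : (0:ℝ) < 1 / ((m : ℝ) + 1))]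
    calc (1 / ((m : ℝ) + 1)) * |∑ k ∈ Finset.Icc 1 n, lam k * f (η k)|
        ≤ (1 / ((m : ℝ) + 1)) * M :=
          mul_le_mul_of_nonneg_left hS (by positivity)
      _ = M / ((m : ℝ) + 1) := by ring
      _ < ε / 2 := hMm
  have hB : |(m : ℝ) * (f (η n) - f (η 0))| ≤ ε / 2 := by
    rw [abs_mul, abs_of_pos hmpos]
    calc (m : ℝ) * |f (η n) - f (η 0)| ≤ (m : ℝ) * (ε / (2 * m)) :=
          mul_le_mul_of_nonneg_left hfar.le hmpos.le
      _ = ε / 2 := by field_simp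
  calc |(1 / ((m : ℝ) + 1)) * ∑ k ∈ Finset.Icc 1 n, lam k * f (η k)
        + (m : ℝ) * (f (η n) - f (η 0))|
      ≤ |(1 / ((m : ℝ) + 1)) * ∑ k ∈ Finset.Icc 1 n, lam k * f (η k)|
        + |(m : ℝ) * (f (η n) - f (η 0))| := abs_add_le _ _
    _ < ε / 2 + ε / 2 := add_lt_add_of_lt_of_le hA hB
    _ = ε := by ring
end
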